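/- arXiv:2509.07652 — 8 statements merged into one kernel-verified Lean document; each statement's English description precedes it below -/
import Mathlib

section
/- Let μ > 1 and let (c_k)_{k≥1} be a nondecreasing sequence of positive real numbers. Suppose there exist constants C > 0 and k₀ ∈ ℕ such that c_{k+1} − c_k ≤ C (c_{k+1}^{1/μ} + c_k^{1/μ} + 1) for all k ≥ k₀. Then there exists a constant C' > 0 such that c_k ≤ C' k^{μ/(μ−1)} for all k ≥ 1. -/
private lemma concave_gain (a b α β : ℝ) (ha : 0 < a) (hab : a ≤ b) (hα : 0 < α)
    (hβ : 0 < β) (hs : α + β = 1) : b ^ α - a ^ α ≤ α * (b - a) / a ^ β := by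
  have hb : 0 < b := ha.trans_le hab
  have key := Real.geom_mean_le_arith_mean2_weighted hα.le hβ.le hb.le ha.le hs
  have haβ : (0:ℝ) < a ^ β := Real.rpow_pos_of_pos ha β
  rw [le_div_iff₀ haβ]
  have haa : a ^ α * a ^ β = a := by
    rw [← Real.rpow_add ha, hs, Real.rpow_one]
  nlinarith [key]

theorem stmt_0 (μ : ℝ) (hμ : 1 < μ) (c : ℕ → ℝ)
    (hpos : ∀ k, 1 ≤ k → 0 < c k)
    (hmono : ∀ k, 1 ≤ k → c k ≤ c (k + 1))
    (C : ℝ) (hC : 0 < C) (k₀ : ℕ)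
    (hrec : ∀ k, k₀ ≤ k →
      c (k + 1) - c k ≤ C * (c (k + 1) ^ (1 / μ) + c k ^ (1 / μ) + 1)) :
    ∃ C' : ℝ, 0 < C' ∧ ∀ k, 1 ≤ k → c k ≤ C' * (k : ℝ) ^ (μ / (μ - 1)) := by
  have hμ0 : (0:ℝ) < μ := lt_trans one_pos hμ
  have hμ1 : (0:ℝ) < μ - 1 := by linarith
  set β : ℝ := 1 / μ with hβdef
  set α : ℝ := 1 - β with hαdef
  have hβ : 0 < β := by positivity
  have hβ1 : β < 1 := by rw [hβdef, div_lt_one hμ0]; linarith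
  have hα : 0 < α := by simp only [hαdef]; linarith
  have hs : α + β = 1 := by ring
  have hαval : α = (μ - 1) / μ := by
    rw [hαdef, hβdef]; field_simp
  have h1α : 1 / α = μ / (μ - 1) := by
    rw [hαval, one_div_div]
  have hexp : (0:ℝ) ≤ μ / (μ - 1) := by positivity
  clear_value α β
  -- k₁ and constants
  set k₁ : ℕ := max k₀ 1 with hk₁def
  have hk₁1 : 1 ≤ k₁ := le_max_right _ _
  have hk₁0 : k₀ ≤ k₁ := le_max_left _ _
  set M : ℝ := max 2 ((6 * C) ^ (μ / (μ - 1))) with hMdef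
  have hM2 : (2:ℝ) ≤ M := le_max_left _ _
  set K : ℝ := M ^ α + 4 * C with hKdef
  have hM0 : (0:ℝ) < M := by linarith
  have hK : 0 < K := by
    have : (0:ℝ) < M ^ α := Real.rpow_pos_of_pos hM0 α
    linarith
  have hMα : (0:ℝ) < M ^ α := Real.rpow_pos_of_pos hM0 α
  have hM6C : (6 * C) ^ (μ / (μ - 1)) ≤ M := le_max_right _ _
  clear_value k₁ M K
  -- monotone chain
  have hmono' : ∀ n, 1 ≤ n → ∀ m, n ≤ m → c n ≤ c m := by
    intro n hn m hm
    induction m, hm using Nat.le_induction with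
    | base => exact le_refl _
    | succ m hm ih => exact le_trans ih (hmono m (le_trans hn hm))
  -- step lemma
  have hstep : ∀ k, k₁ ≤ k → c (k + 1) ^ α ≤ c k ^ α + K := by
    intro k hk
    have hk1 : 1 ≤ k := le_trans hk₁1 hk
    have ha : 0 < c k := hpos k hk1
    have hab : c k ≤ c (k + 1) := hmono k hk1
    have hb : 0 < c (k + 1) := lt_of_lt_of_le ha hab
    have hΔ := hrec k (le_trans hk₁0 hk)
    set a := c k
    set b := c (k + 1)
    by_cases hbM : b ≤ M
    · have h1 : b ^ α ≤ M ^ α := Real.rpow_le_rpow hb.le hbM hα.le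
      have h2 : 0 ≤ a ^ α := Real.rpow_nonneg ha.le α
      simp only [hKdef]; linarith
    · push_neg at hbM
      have hb1 : (1:ℝ) ≤ b := by linarith
      have hbβ1 : (1:ℝ) ≤ b ^ β := Real.one_le_rpow hb1 hβ.le
      by_cases h2a : b ≤ 2 * a
      · -- main case: use concavity
        have ha1 : (1:ℝ) ≤ a := by linarith
        have haβ1 : (1:ℝ) ≤ a ^ β := Real.one_le_rpow ha1 hβ.le
        have haβ0 : (0:ℝ) < a ^ β := Real.rpow_pos_of_pos ha β
        have hbβ : b ^ β ≤ 2 * a ^ β := by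
          calc b ^ β ≤ (2 * a) ^ β := Real.rpow_le_rpow hb.le h2a hβ.le
            _ = 2 ^ β * a ^ β := Real.mul_rpow (by norm_num) ha.le
            _ ≤ 2 * a ^ β := by
                have h2β : (2:ℝ) ^ β ≤ 2 := by
                  calc (2:ℝ) ^ β ≤ 2 ^ (1:ℝ) :=
                    Real.rpow_le_rpow_of_exponent_le one_le_two hβ1.le
                  _ = 2 := Real.rpow_one 2
                nlinarith
        have hΔ' : b - a ≤ 4 * C * a ^ β := by
          calc b - a ≤ C * (b ^ β + a ^ β + 1) := hΔ
            _ ≤ C * (2 * a ^ β + a ^ β + a ^ β) := by nlinarith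
            _ = 4 * C * a ^ β := by ring
        have hgain := concave_gain a b α β ha hab hα hβ hs
        have : α * (b - a) / a ^ β ≤ 4 * C := by
          rw [div_le_iff₀ haβ0]
          nlinarith [sub_nonneg.mpr hab]
        have h2 : 0 < M ^ α := Real.rpow_pos_of_pos hM0 α
        simp only [hKdef]; linarith
      · -- jump case: contradiction with b > M
        exfalso
        push_neg at h2a
        have hbβ0 : (0:ℝ) < b ^ β := Real.rpow_pos_of_pos hb β
        have h6 : b ≤ 6 * C * b ^ β := by
          have haβb : a ^ β ≤ b ^ β := Real.rpow_le_rpow ha.le hab hβ.le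
          have h1 : C * a ^ β ≤ C * b ^ β := mul_le_mul_of_nonneg_left haβb hC.le
          have h2 : C * 1 ≤ C * b ^ β := mul_le_mul_of_nonneg_left hbβ1 hC.le
          linarith
        have hbα : b ^ α ≤ 6 * C := by
          have hbb : b ^ α * b ^ β = b := by
            rw [← Real.rpow_add hb, hs, Real.rpow_one]
          rw [← mul_le_mul_iff_of_pos_right hbβ0, hbb]
          calc b ≤ 6 * C * b ^ β := h6
            _ = 6 * C * b ^ β := rfl
        have hfinal : b ≤ (6 * C) ^ (μ / (μ - 1)) := by
          rw [← h1α]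
          calc b = (b ^ α) ^ (1 / α) := by
                rw [← Real.rpow_mul hb.le, mul_one_div_cancel hα.ne', Real.rpow_one]
            _ ≤ (6 * C) ^ (1 / α) := Real.rpow_le_rpow (Real.rpow_nonneg hb.le α) hbα
                (by positivity)
        have : b ≤ M := le_trans hfinal hM6C
        linarith
  -- induction
  have hind : ∀ n : ℕ, c (k₁ + n) ^ α ≤ c k₁ ^ α + K * n := by
    intro n
    induction n with
    | zero => simp
    | succ n ih =>
        have := hstep (k₁ + n) (Nat.le_add_right _ _)
        push_cast
        calc c (k₁ + (n + 1)) ^ α = c ((k₁ + n) + 1) ^ α := by ring_nf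
          _ ≤ c (k₁ + n) ^ α + K := this
          _ ≤ c k₁ ^ α + K * n + K := by linarith
          _ = c k₁ ^ α + K * (n + 1) := by ring
  -- assemble
  set A : ℝ := c k₁ ^ α + K with hAdef
  have hck₁ : 0 < c k₁ := hpos k₁ hk₁1
  have hA : 0 < A := by
    have : 0 < c k₁ ^ α := Real.rpow_pos_of_pos hck₁ α
    simp only [hAdef]; linarith
  clear_value A
  refine ⟨max (c k₁) (A ^ (μ / (μ - 1))), lt_max_of_lt_left hck₁, ?_⟩
  intro k hk
  have hk0 : (0:ℝ) < (k:ℝ) := by exact_mod_cast hk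
  have hkpow1 : (1:ℝ) ≤ (k:ℝ) ^ (μ / (μ - 1)) :=
    Real.one_le_rpow (by exact_mod_cast hk) hexp
  by_cases hkk₁ : k₁ ≤ k
  · -- main bound
    obtain ⟨n, rfl⟩ := Nat.exists_eq_add_of_le hkk₁
    have hck : 0 < c (k₁ + n) := hpos _ (le_trans hk₁1 (Nat.le_add_right _ _))
    have h1 : c (k₁ + n) ^ α ≤ A * (k₁ + n : ℕ) := by
      have := hind n
      have hn : (n:ℝ) ≤ ((k₁ + n : ℕ):ℝ) := by push_cast; linarith [Nat.cast_nonneg (α := ℝ) k₁]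
      have hkc : (1:ℝ) ≤ ((k₁ + n : ℕ):ℝ) := by exact_mod_cast le_trans hk₁1 (Nat.le_add_right _ _)
      have hck₁α : 0 ≤ c k₁ ^ α := Real.rpow_nonneg hck₁.le α
      calc c (k₁ + n) ^ α ≤ c k₁ ^ α + K * n := this
        _ ≤ c k₁ ^ α * ((k₁ + n : ℕ):ℝ) + K * ((k₁ + n : ℕ):ℝ) := by
            have e1 : c k₁ ^ α * 1 ≤ c k₁ ^ α * ((k₁ + n : ℕ):ℝ) :=
              mul_le_mul_of_nonneg_left hkc hck₁α
            have e2 : K * (n:ℝ) ≤ K * ((k₁ + n : ℕ):ℝ) :=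
              mul_le_mul_of_nonneg_left hn hK.le
            linarith
        _ = A * ((k₁ + n : ℕ):ℝ) := by rw [hAdef]; ring
    have h2 : c (k₁ + n) ≤ (A * ((k₁ + n : ℕ):ℝ)) ^ (μ / (μ - 1)) := by
      have := Real.rpow_le_rpow (Real.rpow_nonneg hck.le α) h1 hexp
      rwa [← h1α, ← Real.rpow_mul hck.le, mul_one_div_cancel hα.ne', Real.rpow_one,
        h1α] at this
    calc c (k₁ + n) ≤ (A * ((k₁ + n : ℕ):ℝ)) ^ (μ / (μ - 1)) := h2
      _ = A ^ (μ / (μ - 1)) * ((k₁ + n : ℕ):ℝ) ^ (μ / (μ - 1)) := by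
          rw [Real.mul_rpow hA.le (by positivity)]
      _ ≤ max (c k₁) (A ^ (μ / (μ - 1))) * ((k₁ + n : ℕ):ℝ) ^ (μ / (μ - 1)) := by
          apply mul_le_mul_of_nonneg_right (le_max_right _ _) (by positivity)
  · push_neg at hkk₁
    have h1 : c k ≤ c k₁ := hmono' k hk k₁ hkk₁.le
    calc c k ≤ c k₁ := h1
      _ ≤ max (c k₁) (A ^ (μ / (μ - 1))) := le_max_left _ _
      _ ≤ max (c k₁) (A ^ (μ / (μ - 1))) * (k:ℝ) ^ (μ / (μ - 1)) :=
          le_mul_of_one_le_right (le_of_lt (lt_max_of_lt_left hck₁)) hkpow1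
end

section
/- Let s ∈ (0,1) and let (c_k)_{k≥1} be a nondecreasing sequence of positive real numbers. Suppose there exist D > 0 and k₁ ∈ ℕ such that c_{k+1} − c_k ≤ D c_{k+1}^{s} for all k ≥ k₁. Then the sequence χ_k := c_k · k^{−1/(1−s)} is bounded, i.e. there exists a constant C > 0 with c_k ≤ C k^{1/(1−s)} for all k ≥ 1. -/
open Real

theorem stmt_1 (s : ℝ) (hs0 : 0 < s) (hs1 : s < 1) (c : ℕ → ℝ)
    (hpos : ∀ k, 1 ≤ k → 0 < c k)
    (hmono : ∀ k, 1 ≤ k → c k ≤ c (k + 1))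
    (D : ℝ) (hD : 0 < D) (k₁ : ℕ)
    (hrec : ∀ k, k₁ ≤ k → c (k + 1) - c k ≤ D * c (k + 1) ^ s) :
    ∃ C : ℝ, 0 < C ∧ ∀ k, 1 ≤ k → c k ≤ C * (k : ℝ) ^ (1 / (1 - s)) := by
  have h1s : 0 < 1 - s := by linarith
  set k₀ : ℕ := max k₁ 1 with hk₀
  have hk₀1 : 1 ≤ k₀ := le_max_right _ _
  -- monotonicity of c on [1, ∞)
  have hmono' : ∀ i j : ℕ, 1 ≤ i → i ≤ j → c i ≤ c j := by
    intro i j hi hij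
    induction j with
    | zero => omega
    | succ n ih =>
      rcases Nat.lt_or_ge i (n+1) with h | h
      · have hn : i ≤ n := by omega
        have h1n : 1 ≤ n := le_trans hi hn
        exact le_trans (ih hn) (hmono n h1n)
      · have : i = n + 1 := by omega
        subst this; rfl
  set u : ℕ → ℝ := fun n => c n ^ (1 - s) with hu
  have hupos : ∀ n, 1 ≤ n → 0 < u n := fun n hn =>
    Real.rpow_pos_of_pos (hpos n hn) _
  -- key step: increments of u are bounded by 2D
  have step : ∀ k, k₀ ≤ k → u (k + 1) ≤ u k + 2 * D := by
    intro k hk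
    have hk1 : 1 ≤ k := le_trans hk₀1 hk
    have hb : 0 < c k := hpos k hk1
    have ha : 0 < c (k + 1) := hpos (k + 1) (by omega)
    have hba : c k ≤ c (k + 1) := hmono k hk1
    have hrec' : c (k + 1) - c k ≤ D * c (k + 1) ^ s :=
      hrec k (le_trans (le_max_left _ _) hk)
    have has : 0 < c (k + 1) ^ s := Real.rpow_pos_of_pos ha _
    by_cases hcase : c (k + 1) ≤ 2 * c k
    · -- Bernoulli case
      have ht : (0:ℝ) ≤ c (k + 1) / c k - 1 := by
        rw [sub_nonneg, le_div_iff₀ hb, one_mul]; exact hba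
      have hbern := rpow_one_add_le_one_add_mul_self
        (by linarith : (-1:ℝ) ≤ c (k + 1) / c k - 1) (le_of_lt h1s) (by linarith : 1 - s ≤ 1)
      rw [add_sub_cancel] at hbern
      -- a^{1-s} = (a/b)^{1-s} * b^{1-s}
      have hsplit : c (k + 1) ^ (1 - s) = (c (k + 1) / c k) ^ (1 - s) * c k ^ (1 - s) := by
        rw [← Real.mul_rpow (by positivity) hb.le, div_mul_cancel₀ _ hb.ne']
      have hub : 0 < c k ^ (1 - s) := Real.rpow_pos_of_pos hb _
      have h2 : u (k + 1) ≤ u k + (1 - s) * (c (k + 1) / c k - 1) * c k ^ (1 - s) := by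
        simp only [hu]
        rw [hsplit]
        calc (c (k + 1) / c k) ^ (1 - s) * c k ^ (1 - s)
            ≤ (1 + (1 - s) * (c (k + 1) / c k - 1)) * c k ^ (1 - s) :=
              mul_le_mul_of_nonneg_right hbern hub.le
          _ = c k ^ (1 - s) + (1 - s) * (c (k + 1) / c k - 1) * c k ^ (1 - s) := by ring
      -- bound the increment term
      have hterm : (1 - s) * (c (k + 1) / c k - 1) * c k ^ (1 - s) ≤ 2 * D := by
        have heq : (c (k + 1) / c k - 1) * c k ^ (1 - s)
            = (c (k + 1) - c k) / c k ^ s := by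
          rw [Real.rpow_sub hb, Real.rpow_one]
          field_simp
        rw [mul_assoc, heq]
        have h3 : (c (k + 1) - c k) / c k ^ s ≤ D * (c (k + 1) ^ s / c k ^ s) := by
          rw [div_le_iff₀ (Real.rpow_pos_of_pos hb s)]
          calc c (k + 1) - c k ≤ D * c (k + 1) ^ s := hrec'
            _ = D * (c (k + 1) ^ s / c k ^ s) * c k ^ s := by
                field_simp
        have h4 : c (k + 1) ^ s / c k ^ s ≤ 2 := by
          rw [← Real.div_rpow ha.le hb.le]
          have hd2 : c (k + 1) / c k ≤ 2 := by
            rw [div_le_iff₀ hb]; linarith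
          calc (c (k + 1) / c k) ^ s ≤ (2:ℝ) ^ s :=
                Real.rpow_le_rpow (by positivity) hd2 hs0.le
            _ ≤ (2:ℝ) ^ (1:ℝ) :=
                Real.rpow_le_rpow_of_exponent_le one_le_two hs1.le
            _ = 2 := Real.rpow_one 2
        have h5 : D * (c (k + 1) ^ s / c k ^ s) ≤ D * 2 :=
          mul_le_mul_of_nonneg_left h4 hD.le
        nlinarith [div_nonneg (by linarith : (0:ℝ) ≤ c (k+1) - c k)
          (Real.rpow_pos_of_pos hb s).le]
      linarith
    · -- jump case: c (k+1) > 2 c k, then u (k+1) ≤ 2D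
      push_neg at hcase
      have h6 : c (k + 1) ≤ 2 * D * c (k + 1) ^ s := by nlinarith
      have h7 : u (k + 1) ≤ 2 * D := by
        simp only [hu]
        rw [Real.rpow_sub ha, Real.rpow_one, div_le_iff₀ has]
        linarith
      have := (hupos k hk1).le
      linarith
  -- iterate
  have iter : ∀ n : ℕ, u (k₀ + n) ≤ u k₀ + 2 * D * n := by
    intro n
    induction n with
    | zero => simp
    | succ m ih =>
      have h := step (k₀ + m) (Nat.le_add_right _ _)
      have he : k₀ + (m + 1) = (k₀ + m) + 1 := by omega
      rw [he]
      push_cast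
      linarith
  set A : ℝ := u k₀ + 2 * D with hA
  have hApos : 0 < A := by
    have := (hupos k₀ hk₀1).le
    simp only [hA]; linarith
  -- linear bound on u for all k ≥ 1
  have hulin : ∀ k : ℕ, 1 ≤ k → u k ≤ A * k := by
    intro k hk
    rcases Nat.lt_or_ge k k₀ with h | h
    · have h1 : u k ≤ u k₀ :=
        Real.rpow_le_rpow (hpos k hk).le (hmono' k k₀ hk h.le) h1s.le
      have h2 : (1:ℝ) ≤ (k:ℝ) := by exact_mod_cast hk
      nlinarith [(hupos k₀ hk₀1).le]
    · obtain ⟨n, rfl⟩ := Nat.exists_eq_add_of_le h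
      have := iter n
      have hk0c : (1:ℝ) ≤ (k₀:ℝ) := by exact_mod_cast hk₀1
      have hnn : (0:ℝ) ≤ (n:ℝ) := Nat.cast_nonneg n
      push_cast
      nlinarith [(hupos k₀ hk₀1).le]
  refine ⟨A ^ (1 / (1 - s)), Real.rpow_pos_of_pos hApos _, fun k hk => ?_⟩
  have hck : 0 < c k := hpos k hk
  have hkc : (0:ℝ) ≤ (k:ℝ) := Nat.cast_nonneg k
  have key : c k = (u k) ^ (1 / (1 - s)) := by
    simp only [hu]
    rw [← Real.rpow_mul hck.le, mul_one_div, div_self h1s.ne', Real.rpow_one]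
  rw [key]
  calc (u k) ^ (1 / (1 - s))
      ≤ (A * k) ^ (1 / (1 - s)) :=
        Real.rpow_le_rpow (hupos k hk).le (hulin k hk) (by positivity)
    _ = A ^ (1 / (1 - s)) * (k : ℝ) ^ (1 / (1 - s)) := Real.mul_rpow hApos.le hkc
end

section
/- Let m ≥ 1, η > 0, δ > 2 and 0 < ε < δ − 2, and define G : ℝ^m → ℝ by G(U) = η[(δ−2)|U|^{δ−ε} sin²(|U|^{ε}/ε) + |U|^{δ}]. Then for every U ≠ 0, ½(∇G(U),U) − G(U) = η(δ−2)[ ((δ−ε−2)/2)|U|^{δ−ε} sin²(|U|^{ε}/ε) + (|U|^{δ}/2)(1 + sin(2|U|^{ε}/ε)) ], and in particular ½(∇G(U),U) − G(U) > 0 for all U ≠ 0. -/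
open RealInnerProductSpace

theorem stmt_6 (m : ℕ) (hm : 1 ≤ m) (η δ ε : ℝ) (hη : 0 < η) (hδ : 2 < δ)
    (hε : 0 < ε) (hεδ : ε < δ - 2)
    (G : EuclideanSpace ℝ (Fin m) → ℝ)
    (hGdef : ∀ U : EuclideanSpace ℝ (Fin m),
      G U = η * ((δ - 2) * ‖U‖ ^ (δ - ε) * Real.sin (‖U‖ ^ ε / ε) ^ 2 + ‖U‖ ^ δ)) :
    ∀ U : EuclideanSpace ℝ (Fin m), U ≠ 0 →
      (1 / 2) * ⟪gradient G U, U⟫ - G U =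
        η * (δ - 2) * ((δ - ε - 2) / 2 * ‖U‖ ^ (δ - ε) * Real.sin (‖U‖ ^ ε / ε) ^ 2 +
          ‖U‖ ^ δ / 2 * (1 + Real.sin (2 * ‖U‖ ^ ε / ε))) ∧
      0 < (1 / 2) * ⟪gradient G U, U⟫ - G U := by
  intro U hU
  have hR : (0:ℝ) < ‖U‖ := norm_pos_iff.mpr hU
  set R := ‖U‖ with hRdef
  set q : ℝ := R ^ 2 with hqdef
  have hq : (0:ℝ) < q := by positivity
  -- scalar function h
  set a : ℝ := (δ - ε) / 2 with hadef
  set b : ℝ := ε / 2 with hbdef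
  set c : ℝ := δ / 2 with hcdef
  -- derivative of the inner sin
  have h2 : HasDerivAt (fun t : ℝ => Real.sin (t ^ b / ε))
      (Real.cos (q ^ b / ε) * (q ^ (b - 1) / 2)) q := by
    have := ((Real.hasDerivAt_rpow_const (p := b) (Or.inl hq.ne')).div_const ε).sin
    convert this using 1
    field_simp
    ring
  have h1 : HasDerivAt (fun t : ℝ => t ^ a) (a * q ^ (a - 1)) q :=
    Real.hasDerivAt_rpow_const (Or.inl hq.ne')
  have h3 := h2.pow 2
  have h4 := h1.mul h3
  have h5 := (h4.const_mul (δ - 2)).add (Real.hasDerivAt_rpow_const (p := c) (Or.inl hq.ne'))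
  have hh := h5.const_mul η
  set D : ℝ := η * ((δ - 2) * (a * q ^ (a - 1) * Real.sin (q ^ b / ε) ^ 2 +
      q ^ a * ((2 : ℕ) * Real.sin (q ^ b / ε) ^ 1 *
        (Real.cos (q ^ b / ε) * (q ^ (b - 1) / 2)))) + c * q ^ (c - 1)) with hDdef
  have hhD : HasDerivAt
      (fun t : ℝ => η * ((δ - 2) * (t ^ a * Real.sin (t ^ b / ε) ^ 2) + t ^ c)) D q := hh
  -- fderiv of squared norm
  have hns : HasFDerivAt (fun x : EuclideanSpace ℝ (Fin m) => ‖x‖ ^ 2)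
      ((2 : ℕ) • (innerSL ℝ U)) U := (hasStrictFDerivAt_norm_sq U).hasFDerivAt
  have hGeq : G = (fun t : ℝ => η * ((δ - 2) * (t ^ a * Real.sin (t ^ b / ε) ^ 2) + t ^ c)) ∘
      (fun x : EuclideanSpace ℝ (Fin m) => ‖x‖ ^ 2) := by
    funext x
    have hx : (0:ℝ) ≤ ‖x‖ := norm_nonneg x
    have e2 : ((‖x‖ ^ 2 : ℝ)) = ‖x‖ ^ (2 : ℝ) := by
      rw [show ((2:ℝ)) = ((2:ℕ) : ℝ) by norm_num, Real.rpow_natCast]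
    have ea : ((‖x‖ ^ 2 : ℝ)) ^ a = ‖x‖ ^ (δ - ε) := by
      rw [e2, ← Real.rpow_mul hx]; congr 1; rw [hadef]; ring
    have eb : ((‖x‖ ^ 2 : ℝ)) ^ b = ‖x‖ ^ ε := by
      rw [e2, ← Real.rpow_mul hx]; congr 1; rw [hbdef]; ring
    have ec : ((‖x‖ ^ 2 : ℝ)) ^ c = ‖x‖ ^ δ := by
      rw [e2, ← Real.rpow_mul hx]; congr 1; rw [hcdef]; ring
    simp only [Function.comp, hGdef, ea, eb, ec]
    ring
  have hG : HasFDerivAt G (D • ((2 : ℕ) • (innerSL ℝ U))) U := by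
    rw [hGeq]; exact hhD.comp_hasFDerivAt U hns
  have hgrad : HasGradientAt G ((2 * D) • U) U := by
    rw [hasGradientAt_iff_hasFDerivAt]
    refine hG.congr_fderiv ?_
    ext y
    simp [InnerProductSpace.toDual_apply_apply, real_inner_smul_left]
    ring
  have hgU : gradient G U = (2 * D) • U := hgrad.gradient
  have hinner : ⟪gradient G U, U⟫ = 2 * D * q := by
    rw [hgU, real_inner_smul_left, real_inner_self_eq_norm_sq]
  -- power conversions
  have e2 : (q : ℝ) = R ^ (2 : ℝ) := by
    rw [hqdef, show ((2:ℝ)) = ((2:ℕ) : ℝ) by norm_num, Real.rpow_natCast]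
  have hb : q ^ b = R ^ ε := by
    rw [e2, ← Real.rpow_mul hR.le]; congr 1; rw [hbdef]; ring
  have P1 : q ^ (a - 1) * q = R ^ (δ - ε) := by
    rw [e2, ← Real.rpow_mul hR.le, ← Real.rpow_add hR]
    congr 1; rw [hadef]; ring
  have P2 : q ^ a * (q ^ (b - 1) * q) = R ^ δ := by
    rw [e2, ← Real.rpow_mul hR.le, ← Real.rpow_mul hR.le,
      ← Real.rpow_add hR, ← Real.rpow_add hR]
    congr 1; rw [hadef, hbdef]; ring
  have P3 : q ^ (c - 1) * q = R ^ δ := by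
    rw [e2, ← Real.rpow_mul hR.le, ← Real.rpow_add hR]
    congr 1; rw [hcdef]; ring
  set s := Real.sin (R ^ ε / ε) with hsdef
  set co := Real.cos (R ^ ε / ε) with hcodef
  have hsin2 : Real.sin (2 * R ^ ε / ε) = 2 * s * co := by
    rw [show 2 * R ^ ε / ε = 2 * (R ^ ε / ε) by ring, Real.sin_two_mul]
  have hpyth : s ^ 2 + co ^ 2 = 1 := Real.sin_sq_add_cos_sq _
  have hmain : (1 / 2) * ⟪gradient G U, U⟫ - G U =
      η * (δ - 2) * ((δ - ε - 2) / 2 * R ^ (δ - ε) * s ^ 2 +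
        R ^ δ / 2 * (1 + Real.sin (2 * R ^ ε / ε))) := by
    rw [hinner, hGdef U, hsin2, hDdef, hb, ← hRdef, ← hsdef, ← hcodef]
    have hac : a = (δ - ε) / 2 := hadef
    have hcc : c = δ / 2 := hcdef
    push_cast
    linear_combination (η * (δ - 2) * a * s ^ 2) * P1 + (η * (δ - 2) * s * co) * P2 +
      (η * c) * P3 + (η * (δ - 2) * s ^ 2 * (q ^ (a-1) * q)) * hac +
      (η * (q ^ (c-1) * q)) * hcc
  refine ⟨hmain, ?_⟩
  rw [hmain, hsin2]
  clear hmain hinner hgU hgrad hG hGeq hns hhD hDdef hh h5 h4 h3 h1 h2 P1 P2 P3 hb e2 hGdef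
  clear D hsin2 hq hqdef
  clear q
  have hA : (0:ℝ) < R ^ (δ - ε) := Real.rpow_pos_of_pos hR _
  have hB : (0:ℝ) < R ^ δ := Real.rpow_pos_of_pos hR _
  have hd : (0:ℝ) < δ - ε - 2 := by linarith
  have h1pl : 1 + 2 * s * co = (s + co) ^ 2 := by linear_combination -hpyth
  rw [h1pl]
  have key : (0:ℝ) < (δ - ε - 2) / 2 * R ^ (δ - ε) * s ^ 2 + R ^ δ / 2 * (s + co) ^ 2 := by
    rcases eq_or_ne (s + co) 0 with hsc | hsc
    · have hco : co = -s := by linarith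
      rw [hco] at hpyth
      have hs2 : s ^ 2 = 1 / 2 := by linear_combination hpyth / 2
      rw [hsc, hs2]
      have h0 : (0:ℝ) < (δ - ε - 2) / 2 * R ^ (δ - ε) * (1 / 2) :=
        mul_pos (mul_pos (by linarith) hA) (by norm_num)
      simpa using h0
    · have h2' : (0:ℝ) < (s + co) ^ 2 := by positivity
      have t1 : (0:ℝ) ≤ (δ - ε - 2) / 2 * R ^ (δ - ε) * s ^ 2 :=
        mul_nonneg (mul_nonneg (by linarith) hA.le) (sq_nonneg s)
      have t2 : (0:ℝ) < R ^ δ / 2 * (s + co) ^ 2 :=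
        mul_pos (by positivity) h2'
      linarith
  exact mul_pos (mul_pos hη (by linarith)) key
end

section
/- Let m ≥ 1, η > 0, δ > 2 and 0 < ε < δ − 2, and define G : ℝ^m → ℝ by G(U) = η[(δ−2)|U|^{δ−ε} sin²(|U|^{ε}/ε) + |U|^{δ}]. Then for every μ₀ > 2 there exists U ∈ ℝ^m with U ≠ 0 such that (∇G(U),U) < μ₀ G(U). In other words, G does not satisfy the Ambrosetti–Rabinowitz condition (G''₆). -/
open RealInnerProductSpace

private lemma stmt_7_aux (s co ε u : ℝ) (hε : ε ≠ 0) (hsc : s * co = -(1/2)) :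
    ((2:ℕ):ℝ) * s ^ 1 * (co * (ε/2 * u / ε)) = -(1/2) * u := by
  rw [pow_one]
  push_cast
  field_simp
  linear_combination 2*u * hsc

set_option maxHeartbeats 1000000 in
theorem stmt_7 (m : ℕ) (hm : 1 ≤ m) (η δ ε : ℝ) (hη : 0 < η) (hδ : 2 < δ)
    (hε : 0 < ε) (hεδ : ε < δ - 2)
    (G : EuclideanSpace ℝ (Fin m) → ℝ)
    (hGdef : ∀ U : EuclideanSpace ℝ (Fin m),
      G U = η * ((δ - 2) * ‖U‖ ^ (δ - ε) * Real.sin (‖U‖ ^ ε / ε) ^ 2 + ‖U‖ ^ δ)) :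
    ∀ μ₀ : ℝ, 2 < μ₀ →
      ∃ U : EuclideanSpace ℝ (Fin m), U ≠ 0 ∧ ⟪gradient G U, U⟫ < μ₀ * G U := by
  intro μ₀ hμ₀
  have hπ := Real.pi_pos
  have hπ3 := Real.pi_gt_three
  have hδ2 : (0:ℝ) < δ - 2 := by linarith
  have hμ2 : (0:ℝ) < μ₀ - 2 := by linarith
  obtain ⟨k, hk⟩ := exists_nat_gt ((δ - 2) * ((δ - ε)/2 - μ₀/2) / ((μ₀ - 2) * ε))
  set θ : ℝ := 3*Real.pi/4 + k*(2*Real.pi) with hθdef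
  have hθpos : 0 < θ := by positivity
  set T : ℝ := ε * θ with hTdef
  have hTpos : 0 < T := mul_pos hε hθpos
  have hθk : (k:ℝ) ≤ θ := by
    rw [hθdef]
    linarith only [hπ,
      mul_nonneg (Nat.cast_nonneg (α := ℝ) k) (by linarith : (0:ℝ) ≤ 2*Real.pi - 1)]
  have hbig : (δ - 2) * ((δ - ε)/2 - μ₀/2) < (μ₀ - 2) * T := by
    have h1 : (δ - 2) * ((δ - ε)/2 - μ₀/2) < (μ₀ - 2) * ε * k := by
      rw [div_lt_iff₀ (by positivity)] at hk
      linarith only [hk]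
    have h2 : (μ₀ - 2) * ε * k ≤ (μ₀ - 2) * T := by
      rw [hTdef]
      have h3 : ε * (k:ℝ) ≤ ε * θ := mul_le_mul_of_nonneg_left hθk hε.le
      linarith only [mul_le_mul_of_nonneg_left h3 hμ2.le]
    linarith
  -- sin/cos values at θ
  have hsinθ : Real.sin θ = Real.sqrt 2 / 2 := by
    rw [hθdef, Real.sin_add_nat_mul_two_pi]
    have h34 : 3*Real.pi/4 = Real.pi - Real.pi/4 := by ring
    rw [h34, Real.sin_pi_sub, Real.sin_pi_div_four]
  have hcosθ : Real.cos θ = -(Real.sqrt 2 / 2) := by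
    rw [hθdef, Real.cos_add_nat_mul_two_pi]
    have h34 : 3*Real.pi/4 = Real.pi - Real.pi/4 := by ring
    rw [h34, Real.cos_pi_sub, Real.cos_pi_div_four]
  have h2sqrt : Real.sqrt 2 * Real.sqrt 2 = 2 := Real.mul_self_sqrt (by norm_num)
  have hs2 : Real.sin θ ^ 2 = 1/2 := by
    rw [hsinθ, div_pow, sq, h2sqrt]; norm_num
  have hsc : Real.sin θ * Real.cos θ = -(1/2) := by
    rw [hsinθ, hcosθ]
    linear_combination (-1/4 : ℝ) * h2sqrt
  -- the radius and point
  set r0 : ℝ := T ^ (ε⁻¹) with hr0def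
  have hr0pos : 0 < r0 := Real.rpow_pos_of_pos hTpos _
  have hr0ε : r0 ^ ε = T := Real.rpow_inv_rpow hTpos.le hε.ne'
  have hθT : T / ε = θ := by rw [hTdef, mul_div_cancel_left₀ _ hε.ne']
  set e : EuclideanSpace ℝ (Fin m) := EuclideanSpace.single ⟨0, hm⟩ (1:ℝ) with hedef
  have he : ‖e‖ = 1 := by rw [hedef, EuclideanSpace.norm_single]; norm_num
  set U : EuclideanSpace ℝ (Fin m) := r0 • e with hUdef
  have hUnorm : ‖U‖ = r0 := by
    rw [hUdef, norm_smul, he, mul_one, Real.norm_eq_abs, abs_of_pos hr0pos]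
  have hUne : U ≠ 0 := by
    intro h
    rw [h, norm_zero] at hUnorm
    exact hr0pos.ne' hUnorm.symm
  set t : ℝ := r0 ^ (2:ℕ) with htdef
  have htpos : 0 < t := by positivity
  have ht2 : t = r0 ^ (2:ℝ) := by
    rw [htdef, ← Real.rpow_natCast r0 2]; norm_num
  have htb : t ^ (ε/2) = T := by
    rw [ht2, ← Real.rpow_mul hr0pos.le]
    have h22 : 2 * (ε/2) = ε := by ring
    rw [h22, hr0ε]
  have hta : t ^ ((δ-ε)/2) = r0 ^ (δ - ε) := by
    rw [ht2, ← Real.rpow_mul hr0pos.le]; congr 1; ring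
  have htp : t ^ (δ/2) = r0 ^ δ := by
    rw [ht2, ← Real.rpow_mul hr0pos.le]; congr 1; ring
  have hUinner : ⟪U, U⟫ = t := by
    rw [real_inner_self_eq_norm_sq, hUnorm, htdef]
  -- the radial function
  set φ : ℝ → ℝ := fun s => η * ((δ - 2) * s ^ ((δ-ε)/2) * Real.sin (s ^ (ε/2) / ε) ^ 2 + s ^ (δ/2))
    with hφdef
  have hGφ : G = fun x => φ (⟪x, x⟫) := by
    funext x
    rw [hGdef, hφdef]
    have hx2 : ⟪x, x⟫ = ‖x‖ ^ (2:ℝ) := by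
      rw [real_inner_self_eq_norm_sq, ← Real.rpow_natCast ‖x‖ 2]; norm_num
    have key : ∀ q : ℝ, (‖x‖ ^ (2:ℝ)) ^ (q/2) = ‖x‖ ^ q := by
      intro q
      rw [← Real.rpow_mul (norm_nonneg x)]; congr 1; ring
    simp only [hx2, key (δ - ε), key ε, key δ]
  -- derivatives
  have hd1 : HasDerivAt (fun s : ℝ => (δ - 2) * s ^ ((δ-ε)/2))
      ((δ - 2) * ((δ-ε)/2 * t ^ ((δ-ε)/2 - 1))) t :=
    (Real.hasDerivAt_rpow_const (Or.inl htpos.ne')).const_mul (δ - 2)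
  have hd2 : HasDerivAt (fun s : ℝ => s ^ (ε/2) / ε) (ε/2 * t ^ (ε/2 - 1) / ε) t :=
    (Real.hasDerivAt_rpow_const (Or.inl htpos.ne')).div_const ε
  have hd3 : HasDerivAt (fun s : ℝ => Real.sin (s ^ (ε/2) / ε))
      (Real.cos (t ^ (ε/2) / ε) * (ε/2 * t ^ (ε/2 - 1) / ε)) t := hd2.sin
  have hd4 := hd3.pow 2
  have hd5 := hd1.mul hd4
  have hd6 : HasDerivAt (fun s : ℝ => s ^ (δ/2)) (δ/2 * t ^ (δ/2 - 1)) t :=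
    Real.hasDerivAt_rpow_const (Or.inl htpos.ne')
  have hdφ := (hd5.add hd6).const_mul η
  set c : ℝ := η * ((δ - 2) * ((δ-ε)/2 * t ^ ((δ-ε)/2 - 1)) * Real.sin (t ^ (ε/2) / ε) ^ 2 +
      (δ - 2) * t ^ ((δ-ε)/2) *
        ((2:ℕ) * Real.sin (t ^ (ε/2) / ε) ^ 1 *
          (Real.cos (t ^ (ε/2) / ε) * (ε/2 * t ^ (ε/2 - 1) / ε))) +
      δ/2 * t ^ (δ/2 - 1)) with hcdef
  have hdφ' : HasDerivAt φ c t := by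
    rw [hφdef, hcdef]
    exact hdφ.congr_deriv (by norm_num [Pi.pow_apply])
  -- fderiv of the squared norm
  have hN : HasFDerivAt (fun x : EuclideanSpace ℝ (Fin m) => ⟪x, x⟫)
      ((fderivInnerCLM ℝ (U, U)).comp
        ((ContinuousLinearMap.id ℝ _).prod (ContinuousLinearMap.id ℝ _))) U :=
    (hasFDerivAt_id U).inner ℝ (hasFDerivAt_id U)
  have hcomp : HasFDerivAt G
      (c • ((fderivInnerCLM ℝ (U, U)).comp
        ((ContinuousLinearMap.id ℝ _).prod (ContinuousLinearMap.id ℝ _)))) U := by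
    rw [hGφ]
    have := hdφ'.comp_hasFDerivAt_of_eq U hN hUinner.symm
    simpa [Function.comp_def] using this
  have hgrad : HasGradientAt G ((2 * c) • U) U := by
    rw [hasGradientAt_iff_hasFDerivAt]
    have hEq : (InnerProductSpace.toDual ℝ (EuclideanSpace ℝ (Fin m))) ((2 * c) • U)
        = c • ((fderivInnerCLM ℝ (U, U)).comp
          ((ContinuousLinearMap.id ℝ _).prod (ContinuousLinearMap.id ℝ _))) := by
      ext v
      simp only [InnerProductSpace.toDual_apply_apply, ContinuousLinearMap.smul_apply,
        ContinuousLinearMap.coe_comp', Function.comp_apply, ContinuousLinearMap.prod_apply,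
        ContinuousLinearMap.coe_id', id_eq, fderivInnerCLM_apply, real_inner_smul_left,
        smul_eq_mul, real_inner_comm v U]
      ring
    rw [hEq]
    exact hcomp
  have hgradval : ⟪gradient G U, U⟫ = 2 * c * t := by
    rw [hgrad.gradient, real_inner_smul_left, hUinner]
  -- value of G at U
  have hsinT : Real.sin (t ^ (ε/2) / ε) = Real.sin θ := by rw [htb, hθT]
  have hcosT : Real.cos (t ^ (ε/2) / ε) = Real.cos θ := by rw [htb, hθT]
  set X : ℝ := t ^ ((δ-ε)/2) with hXdef
  set P : ℝ := t ^ (δ/2) with hPdef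
  have hX : 0 < X := Real.rpow_pos_of_pos htpos _
  have hGU : G U = η * ((δ - 2) * X * (1/2) + P) := by
    rw [hGdef, hUnorm, hr0ε, hθT, hs2, ← hta, ← htp]
  -- rpow algebra
  have e1 : t ^ ((δ-ε)/2 - 1) * t = X := by
    rw [hXdef, ← Real.rpow_add_one htpos.ne']; congr 1; ring
  have e2 : t ^ (ε/2 - 1) * t = T := by
    rw [← htb, ← Real.rpow_add_one htpos.ne']; congr 1; ring
  have e3 : t ^ (δ/2 - 1) * t = P := by
    rw [hPdef, ← Real.rpow_add_one htpos.ne']; congr 1; ring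
  have e4 : X * T = P := by
    rw [hXdef, ← htb, hPdef, ← Real.rpow_add htpos]; congr 1; ring
  -- closed form of the derivative term
  have hc2 : c = η * ((δ - 2) * ((δ-ε)/2 * t ^ ((δ-ε)/2 - 1)) * (1/2) +
      (δ - 2) * X * (-(1/2) * t ^ (ε/2 - 1)) + δ/2 * t ^ (δ/2 - 1)) := by
    rw [hcdef, hsinT, hcosT, hs2,
      stmt_7_aux (Real.sin θ) (Real.cos θ) ε (t ^ (ε/2 - 1)) hε.ne' hsc]
  have hgv2 : 2 * c * t = η * ((δ - 2) * ((δ-ε)/2) * X + 2 * P) := by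
    rw [hc2]
    linear_combination η*(δ-2)*((δ-ε)/2)*e1 - η*(δ-2)*X*e2 + η*δ*e3 - η*(δ-2)*e4
  -- final inequality
  refine ⟨U, hUne, ?_⟩
  rw [hgradval, hgv2, hGU, ← e4]
  have hfact : (δ - 2) * ((δ-ε)/2) + 2*T < μ₀ * (δ - 2) * (1/2) + μ₀ * T := by
    linarith only [hbig]
  calc η * ((δ - 2) * ((δ-ε)/2) * X + 2 * (X * T))
      = (η * X) * ((δ - 2) * ((δ-ε)/2) + 2*T) := by ring
    _ < (η * X) * (μ₀ * (δ - 2) * (1/2) + μ₀ * T) :=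
        mul_lt_mul_of_pos_left hfact (mul_pos hη hX)
    _ = μ₀ * (η * ((δ - 2) * X * (1/2) + X * T)) := by ring
end

section
/- Let m ≥ 1 and η > 0, and define G : ℝ^m → ℝ by G(U) = η|U|² ln(1+|U|²). Then there exist constants r₀, r₁ > 0 and exponents γ₁, γ₂ ∈ (0,1) such that (∇G(U),U) ≤ r₀ (½(∇G(U),U) − G(U))^{γ₁} |U|^{γ₂} for all U with |U| ≥ r₁. -/
lemma pow18 : ((2:ℝ)) ^ ((1:ℝ)/8) ≤ 9/8 := by
  have h : ((2:ℝ)) ^ ((1:ℝ)/8) ≤ ((9/8:ℝ)^(8:ℕ)) ^ ((1:ℝ)/8) := by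
    apply Real.rpow_le_rpow (by norm_num) (by norm_num) (by norm_num)
  calc ((2:ℝ)) ^ ((1:ℝ)/8) ≤ ((9/8:ℝ)^(8:ℕ)) ^ ((1:ℝ)/8) := h
    _ = (9/8:ℝ) ^ ((8:ℝ) * ((1:ℝ)/8)) := by
        rw [← Real.rpow_natCast (9/8:ℝ) 8, ← Real.rpow_mul (by norm_num)]
        norm_num
    _ = 9/8 := by norm_num

lemma log_le (r : ℝ) (hr : 1 ≤ r) : Real.log (1 + r^2) ≤ 9 * r ^ ((1:ℝ)/4) := by
  have h1 : (0:ℝ) < 1 + r^2 := by positivity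
  have hr0 : (0:ℝ) ≤ r := by linarith
  have e1 : Real.log (1 + r^2) = 8 * Real.log ((1 + r^2) ^ ((1:ℝ)/8)) := by
    rw [Real.log_rpow h1]; ring
  have e2 : Real.log ((1 + r^2) ^ ((1:ℝ)/8)) ≤ (1 + r^2) ^ ((1:ℝ)/8) :=
    Real.log_le_self (by positivity)
  have e3 : (1 + r^2 : ℝ) ≤ 2 * r^2 := by nlinarith
  have e4 : ((1 + r^2 : ℝ)) ^ ((1:ℝ)/8) ≤ (2 * r^2) ^ ((1:ℝ)/8) :=
    Real.rpow_le_rpow (le_of_lt h1) e3 (by norm_num)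
  have e5 : ((2:ℝ) * r^2) ^ ((1:ℝ)/8) = (2:ℝ)^((1:ℝ)/8) * r ^ ((1:ℝ)/4) := by
    rw [Real.mul_rpow (by norm_num) (by positivity), ← Real.rpow_natCast r 2,
      ← Real.rpow_mul hr0]
    norm_num
  have e6 : (2:ℝ)^((1:ℝ)/8) * r ^ ((1:ℝ)/4) ≤ (9/8) * r ^ ((1:ℝ)/4) := by
    apply mul_le_mul_of_nonneg_right pow18 (by positivity)
  calc Real.log (1 + r^2) = 8 * Real.log ((1 + r^2) ^ ((1:ℝ)/8)) := e1
    _ ≤ 8 * ((9/8) * r ^ ((1:ℝ)/4)) := by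
        apply mul_le_mul_of_nonneg_left _ (by norm_num)
        calc Real.log ((1 + r^2) ^ ((1:ℝ)/8)) ≤ (1 + r^2) ^ ((1:ℝ)/8) := e2
          _ ≤ (2 * r^2) ^ ((1:ℝ)/8) := e4
          _ = (2:ℝ)^((1:ℝ)/8) * r ^ ((1:ℝ)/4) := e5
          _ ≤ (9/8) * r ^ ((1:ℝ)/4) := e6
    _ = 9 * r ^ ((1:ℝ)/4) := by ring

lemma key (η r : ℝ) (hη : 0 < η) (hr : 1 ≤ r) :
    2 * (η * Real.log (1 + r^2) + η * r^2 / (1 + r^2)) * r^2 ≤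
    (20 * η * (2/η) ^ ((3:ℝ)/4)) *
      ((1/2) * (2 * (η * Real.log (1 + r^2) + η * r^2 / (1 + r^2)) * r^2)
        - η * r^2 * Real.log (1 + r^2)) ^ ((3:ℝ)/4) * r ^ ((3:ℝ)/4) := by
  have h1 : (0:ℝ) < 1 + r^2 := by positivity
  have hr0 : (0:ℝ) < r := by linarith
  have hmid : (1/2) * (2 * (η * Real.log (1 + r^2) + η * r^2 / (1 + r^2)) * r^2)
        - η * r^2 * Real.log (1 + r^2) = η * r^4 / (1 + r^2) := by
    field_simp; ring
  rw [hmid]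
  -- lower bound on A := η r⁴/(1+r²)
  have hA : η * r^2 / 2 ≤ η * r^4 / (1 + r^2) := by
    rw [div_le_div_iff₀ (by norm_num) h1]
    have h2 : 1 + r^2 ≤ 2 * r^2 := by nlinarith
    nlinarith [mul_le_mul_of_nonneg_left h2 (show (0:ℝ) ≤ η * r^2 by positivity)]
  have hA34 : (η * r^2 / 2) ^ ((3:ℝ)/4) ≤ (η * r^4 / (1 + r^2)) ^ ((3:ℝ)/4) :=
    Real.rpow_le_rpow (by positivity) hA (by norm_num)
  have hsplit : (η * r^2 / 2) ^ ((3:ℝ)/4) = (η/2) ^ ((3:ℝ)/4) * r ^ ((3:ℝ)/2) := by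
    rw [show η * r^2 / 2 = (η/2) * r^2 by ring,
      Real.mul_rpow (by positivity) (by positivity),
      ← Real.rpow_natCast r 2, ← Real.rpow_mul (le_of_lt hr0)]
    norm_num
  have hcancel : (2/η) ^ ((3:ℝ)/4) * (η/2) ^ ((3:ℝ)/4) = 1 := by
    rw [← Real.mul_rpow (by positivity) (by positivity)]
    rw [show (2/η) * (η/2) = 1 by field_simp]
    simp
  -- RHS lower bound: 20 η r^{9/4}
  have hRHS : 20 * η * r ^ ((9:ℝ)/4) ≤
      (20 * η * (2/η) ^ ((3:ℝ)/4)) * (η * r^4 / (1 + r^2)) ^ ((3:ℝ)/4) * r ^ ((3:ℝ)/4) := by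
    have step : (20 * η * (2/η) ^ ((3:ℝ)/4)) * ((η/2) ^ ((3:ℝ)/4) * r ^ ((3:ℝ)/2)) * r ^ ((3:ℝ)/4)
        ≤ (20 * η * (2/η) ^ ((3:ℝ)/4)) * (η * r^4 / (1 + r^2)) ^ ((3:ℝ)/4) * r ^ ((3:ℝ)/4) := by
      apply mul_le_mul_of_nonneg_right _ (by positivity)
      apply mul_le_mul_of_nonneg_left _ (by positivity)
      rw [← hsplit]; exact hA34
    refine le_trans (le_of_eq ?_) step
    have : r ^ ((9:ℝ)/4) = r ^ ((3:ℝ)/2) * r ^ ((3:ℝ)/4) := by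
      rw [← Real.rpow_add hr0]; norm_num
    rw [this]
    calc 20 * η * (r ^ ((3:ℝ)/2) * r ^ ((3:ℝ)/4))
        = (20 * η * ((2/η) ^ ((3:ℝ)/4) * (η/2) ^ ((3:ℝ)/4))) * (r ^ ((3:ℝ)/2) * r ^ ((3:ℝ)/4)) := by
          rw [hcancel]; ring
      _ = (20 * η * (2/η) ^ ((3:ℝ)/4)) * ((η/2) ^ ((3:ℝ)/4) * r ^ ((3:ℝ)/2)) * r ^ ((3:ℝ)/4) := by ring
  refine le_trans ?_ hRHS
  -- LHS ≤ 20 η r^{9/4}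
  have hL : Real.log (1 + r^2) ≤ 9 * r ^ ((1:ℝ)/4) := log_le r hr
  have hq : r^4 / (1 + r^2) ≤ r^2 := by
    rw [div_le_iff₀ h1]; nlinarith
  have h94 : r ^ ((9:ℝ)/4) = r^2 * r ^ ((1:ℝ)/4) := by
    rw [← Real.rpow_natCast r 2, ← Real.rpow_add hr0]; norm_num
  have hr14 : (1:ℝ) ≤ r ^ ((1:ℝ)/4) := Real.one_le_rpow hr (by norm_num)
  have expand : 2 * (η * Real.log (1 + r^2) + η * r^2 / (1 + r^2)) * r^2
      = 2 * η * r^2 * Real.log (1 + r^2) + 2 * η * (r^4 / (1 + r^2)) := by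
    field_simp
  rw [expand, h94]
  have t1 : 2 * η * r^2 * Real.log (1 + r^2) ≤ 18 * η * (r^2 * r ^ ((1:ℝ)/4)) := by
    have := mul_le_mul_of_nonneg_left hL (show (0:ℝ) ≤ 2 * η * r^2 by positivity)
    nlinarith
  have t2 : 2 * η * (r^4 / (1 + r^2)) ≤ 2 * η * (r^2 * r ^ ((1:ℝ)/4)) := by
    apply mul_le_mul_of_nonneg_left _ (by positivity)
    nlinarith
  nlinarith [t1, t2]


open RealInnerProductSpace

theorem stmt_11 (m : ℕ) (hm : 1 ≤ m) (η : ℝ) (hη : 0 < η)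
    (G : EuclideanSpace ℝ (Fin m) → ℝ)
    (hGdef : ∀ U : EuclideanSpace ℝ (Fin m),
      G U = η * ‖U‖ ^ 2 * Real.log (1 + ‖U‖ ^ 2)) :
    ∃ r₀ : ℝ, 0 < r₀ ∧ ∃ r₁ : ℝ, 0 < r₁ ∧ ∃ γ₁ ∈ Set.Ioo (0 : ℝ) 1,
      ∃ γ₂ ∈ Set.Ioo (0 : ℝ) 1,
        ∀ U : EuclideanSpace ℝ (Fin m), r₁ ≤ ‖U‖ →
          ⟪gradient G U, U⟫ ≤
            r₀ * ((1 / 2) * ⟪gradient G U, U⟫ - G U) ^ γ₁ * ‖U‖ ^ γ₂ := by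
  have hGeq : G = fun x : EuclideanSpace ℝ (Fin m) => η * ‖x‖ ^ 2 * Real.log (1 + ‖x‖ ^ 2) :=
    funext hGdef
  refine ⟨20 * η * (2/η) ^ ((3:ℝ)/4), by positivity, 1, one_pos,
    (3:ℝ)/4, ⟨by norm_num, by norm_num⟩, (3:ℝ)/4, ⟨by norm_num, by norm_num⟩, ?_⟩
  intro U hU
  have h1 : (0:ℝ) < 1 + ‖U‖^2 := by positivity
  -- gradient computation
  have hgrad : HasGradientAt G
      ((2 * (η * Real.log (1 + ‖U‖^2) + η * ‖U‖^2 / (1 + ‖U‖^2))) • U) U := by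
    rw [hGeq]
    have hN : HasFDerivAt (fun x : EuclideanSpace ℝ (Fin m) => ‖x‖ ^ 2)
        (2 • (innerSL ℝ U)) U := (hasFDerivAt_id U).norm_sq
    have hf : HasDerivAt (fun t : ℝ => η * t * Real.log (1 + t))
        (η * Real.log (1 + ‖U‖^2) + η * ‖U‖^2 / (1 + ‖U‖^2)) (‖U‖^2) := by
      have h2 : HasDerivAt (fun t : ℝ => Real.log (1 + t)) (1/(1 + ‖U‖^2)) (‖U‖^2) := by
        have := ((hasDerivAt_id (‖U‖^2)).const_add 1).log (ne_of_gt h1)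
        simpa using this
      have := ((hasDerivAt_id (‖U‖^2)).const_mul η).mul h2
      refine this.congr_deriv ?_
      simp only [id]; ring
    have := hf.comp_hasFDerivAt U hN
    rw [hasGradientAt_iff_hasFDerivAt]
    refine this.congr_fderiv ?_
    ext y
    simp [InnerProductSpace.toDual_apply_apply, real_inner_smul_left, real_inner_comm]
    ring
  have hg : gradient G U = (2 * (η * Real.log (1 + ‖U‖^2) + η * ‖U‖^2 / (1 + ‖U‖^2))) • U :=
    hgrad.gradient
  have hinner : ⟪gradient G U, U⟫ =
      2 * (η * Real.log (1 + ‖U‖^2) + η * ‖U‖^2 / (1 + ‖U‖^2)) * ‖U‖^2 := by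
    rw [hg, real_inner_smul_left, real_inner_self_eq_norm_sq]
  rw [hinner, hGdef U]
  exact key η ‖U‖ hη hU
end

section
/- Let m ≥ 1 and η > 0, and define G : ℝ^m → ℝ by G(U) = η|U|²(|U|² − 2 cos|U|). Then G satisfies condition (G'₆) with μ₀ = 3 and κ₀ = 3η: for all U ∈ ℝ^m, (∇G(U),U) ≥ 3 G(U) − 3η|U|². -/
open RealInnerProductSpace

theorem stmt_15 (m : ℕ) (hm : 1 ≤ m) (η : ℝ) (hη : 0 < η)
    (G : EuclideanSpace ℝ (Fin m) → ℝ)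
    (hGdef : ∀ U : EuclideanSpace ℝ (Fin m),
      G U = η * ‖U‖ ^ 2 * (‖U‖ ^ 2 - 2 * Real.cos ‖U‖)) :
    ∀ U : EuclideanSpace ℝ (Fin m),
      3 * G U - 3 * η * ‖U‖ ^ 2 ≤ ⟪gradient G U, U⟫ := by
  intro U
  rcases eq_or_ne U 0 with h0 | h0
  · simp [h0, hGdef]
  -- setup
  set r : ℝ := ‖U‖ with hr
  have hrpos : 0 < r := norm_pos_iff.mpr h0
  set s : ℝ := r ^ 2 with hs
  have hspos : 0 < s := by positivity
  have hsqrt : Real.sqrt s = r := by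
    rw [hs, Real.sqrt_sq hrpos.le]
  -- the scalar function φ
  set φ : ℝ → ℝ := fun t => η * (t ^ 2 - 2 * (t * Real.cos (Real.sqrt t))) with hφ
  have hsqrtD : HasDerivAt Real.sqrt (1 / (2 * Real.sqrt s)) s :=
    Real.hasDerivAt_sqrt hspos.ne'
  have hcosD : HasDerivAt (fun t => Real.cos (Real.sqrt t))
      (-Real.sin (Real.sqrt s) * (1 / (2 * Real.sqrt s))) s :=
    (Real.hasDerivAt_cos (Real.sqrt s)).comp s hsqrtD
  have hmulD : HasDerivAt (fun t => t * Real.cos (Real.sqrt t))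
      (1 * Real.cos (Real.sqrt s) + s * (-Real.sin (Real.sqrt s) * (1 / (2 * Real.sqrt s)))) s :=
    (hasDerivAt_id s).mul hcosD
  have hpowD : HasDerivAt (fun t : ℝ => t ^ 2) (2 * s ^ 1) s := hasDerivAt_pow 2 s
  set D : ℝ := η * (2 * s ^ 1 - 2 * (1 * Real.cos (Real.sqrt s)
      + s * (-Real.sin (Real.sqrt s) * (1 / (2 * Real.sqrt s))))) with hD
  have hφD : HasDerivAt φ D s := ((hpowD.sub (hmulD.const_mul 2)).const_mul η)
  -- norm squared
  have hq : HasFDerivAt (fun V : EuclideanSpace ℝ (Fin m) => ‖V‖ ^ 2)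
      (2 • innerSL ℝ U) U := (hasStrictFDerivAt_norm_sq U).hasFDerivAt
  have hG : HasFDerivAt G (D • (2 • innerSL ℝ U)) U := by
    have hcomp := hφD.comp_hasFDerivAt U hq
    refine hcomp.congr_of_eventuallyEq (Filter.Eventually.of_forall fun V => ?_)
    rw [hGdef V]
    simp only [hφ, Function.comp_apply, Real.sqrt_sq (norm_nonneg V)]
    ring
  have hgrad : HasGradientAt G ((InnerProductSpace.toDual ℝ _).symm
      (D • (2 • innerSL ℝ U))) U := hG.hasGradientAt
  have hdiff : DifferentiableAt ℝ G U := hG.differentiableAt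
  have heq : gradient G U = (InnerProductSpace.toDual ℝ _).symm (D • (2 • innerSL ℝ U)) :=
    hdiff.hasGradientAt.unique hgrad
  have hinner : ⟪gradient G U, U⟫ = D * (2 * ⟪U, U⟫) := by
    rw [heq, InnerProductSpace.toDual_symm_apply]
    simp [real_inner_comm]
  rw [hinner, hGdef U, real_inner_self_eq_norm_sq]
  rw [hD, hsqrt]
  have hss : s = r ^ 2 := hs
  -- simplify D
  have hsin : r * Real.sin r ≥ -r := by
    nlinarith [Real.neg_one_le_sin r, hrpos.le]
  have hcos1 : Real.cos r ≤ 1 := Real.cos_le_one r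
  have hcosm1 : -1 ≤ Real.cos r := Real.neg_one_le_cos r
  have h2r : (2 : ℝ) * r ≠ 0 := by positivity
  have key : η * (2 * (r^2) ^ 1 - 2 * (1 * Real.cos r
      + r^2 * (-Real.sin r * (1 / (2 * r))))) * (2 * r ^ 2)
      = η * (4 * r^4 - 4 * r^2 * Real.cos r + 2 * r^3 * Real.sin r) := by
    field_simp
    ring
  rw [← hr, hss, key]
  nlinarith [sq_nonneg (r - 1), sq_nonneg r, mul_pos hη (mul_pos hrpos hrpos),
    mul_nonneg (mul_nonneg hη.le (sq_nonneg r)) (sq_nonneg (r-1)),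
    mul_nonneg (mul_nonneg hη.le (sq_nonneg r)) (add_nonneg (add_nonneg (by nlinarith : (0:ℝ) ≤ r^2 + 2*Real.cos r + 2) (by nlinarith : (0:ℝ) ≤ 0)) (le_refl 0))]
end

section
/- Let m ≥ 1, η > 0 and τ > 0, and define G : ℝ^m → ℝ by G(U) = ητ[1 − 1/ln(e+|U|)]|U|². Then for every U ∈ ℝ^m, ½(∇G(U),U) − G(U) = ητ|U|³ / (2(e+|U|) ln²(e+|U|)); in particular ½(∇G(U),U) − G(U) > 0 for all U ≠ 0. -/
open RealInnerProductSpace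

theorem stmt_16 (m : ℕ) (hm : 1 ≤ m) (η τ : ℝ) (hη : 0 < η) (hτ : 0 < τ)
    (G : EuclideanSpace ℝ (Fin m) → ℝ)
    (hGdef : ∀ U : EuclideanSpace ℝ (Fin m),
      G U = η * τ * (1 - 1 / Real.log (Real.exp 1 + ‖U‖)) * ‖U‖ ^ 2) :
    ∀ U : EuclideanSpace ℝ (Fin m),
      (1 / 2) * ⟪gradient G U, U⟫ - G U =
        η * τ * ‖U‖ ^ 3 / (2 * (Real.exp 1 + ‖U‖) * Real.log (Real.exp 1 + ‖U‖) ^ 2) ∧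
      (U ≠ 0 → 0 < (1 / 2) * ⟪gradient G U, U⟫ - G U) := by
  intro U
  by_cases hU : U = 0
  · subst hU
    constructor
    · simp [hGdef]
    · intro h; exact absurd rfl h
  -- nonzero case
  set r : ℝ := ‖U‖ with hr_def
  have hr : 0 < r := norm_pos_iff.mpr hU
  have hrne : r ≠ 0 := ne_of_gt hr
  have he : (0:ℝ) < Real.exp 1 := Real.exp_pos 1
  have her : 0 < Real.exp 1 + r := by linarith
  have herne : Real.exp 1 + r ≠ 0 := ne_of_gt her
  set L : ℝ := Real.log (Real.exp 1 + r) with hL_def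
  have hL1 : 1 < L := by
    have : Real.log (Real.exp 1) < Real.log (Real.exp 1 + r) :=
      Real.log_lt_log he (by linarith)
    rwa [Real.log_exp] at this
  have hL0 : 0 < L := lt_trans one_pos hL1
  have hLne : L ≠ 0 := ne_of_gt hL0
  set c : ℝ := η * τ with hc_def
  set ψ : ℝ → ℝ := fun s => c * ((1 - (Real.log (Real.exp 1 + Real.sqrt s))⁻¹) * s) with hψ
  have hs₀ : Real.sqrt (r ^ 2) = r := by
    rw [Real.sqrt_sq hr.le]
  have hs₀pos : (0:ℝ) < r ^ 2 := by positivity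
  -- derivative of ψ at r^2
  have h0 : HasDerivAt Real.sqrt (1 / (2 * r)) (r ^ 2) := by
    have := Real.hasDerivAt_sqrt (ne_of_gt hs₀pos)
    rwa [hs₀] at this
  have h1 : HasDerivAt (fun s => Real.exp 1 + Real.sqrt s) (1 / (2 * r)) (r ^ 2) :=
    h0.const_add _
  have h2 : HasDerivAt (fun s => Real.log (Real.exp 1 + Real.sqrt s))
      ((1 / (2 * r)) / (Real.exp 1 + r)) (r ^ 2) := by
    have := h1.log (by rw [hs₀]; exact herne)
    rwa [hs₀] at this
  have h3 : HasDerivAt (fun s => (Real.log (Real.exp 1 + Real.sqrt s))⁻¹)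
      (-((1 / (2 * r)) / (Real.exp 1 + r)) / L ^ 2) (r ^ 2) := by
    have := h2.inv (by rw [hs₀]; exact hLne)
    rwa [hs₀] at this
  have h4 : HasDerivAt (fun s => 1 - (Real.log (Real.exp 1 + Real.sqrt s))⁻¹)
      (-(-((1 / (2 * r)) / (Real.exp 1 + r)) / L ^ 2)) (r ^ 2) :=
    h3.const_sub 1
  have h5 : HasDerivAt (fun s => (1 - (Real.log (Real.exp 1 + Real.sqrt s))⁻¹) * s)
      ((-(-((1 / (2 * r)) / (Real.exp 1 + r)) / L ^ 2)) * (r ^ 2)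
        + (1 - L⁻¹) * 1) (r ^ 2) := by
    have := h4.fun_mul (hasDerivAt_id' (r ^ 2))
    simpa [hs₀, ← hL_def] using this
  set ψ' : ℝ := c * ((-(-((1 / (2 * r)) / (Real.exp 1 + r)) / L ^ 2)) * (r ^ 2)
        + (1 - L⁻¹) * 1) with hψ'
  have h6 : HasDerivAt ψ ψ' (r ^ 2) := h5.const_mul c
  -- fderiv of x ↦ ⟪x,x⟫
  have h7 : HasFDerivAt (fun x : EuclideanSpace ℝ (Fin m) => ⟪x, x⟫)
      ((fderivInnerCLM ℝ (U, U)).comp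
        ((ContinuousLinearMap.id ℝ _).prod (ContinuousLinearMap.id ℝ _))) U :=
    (hasFDerivAt_id U).inner ℝ (hasFDerivAt_id U)
  have hq : ⟪U, U⟫ = r ^ 2 := real_inner_self_eq_norm_sq U
  have h8 : HasFDerivAt (fun x : EuclideanSpace ℝ (Fin m) => ψ ⟪x, x⟫)
      (ψ' • ((fderivInnerCLM ℝ (U, U)).comp
        ((ContinuousLinearMap.id ℝ _).prod (ContinuousLinearMap.id ℝ _)))) U := by
    have h6' : HasDerivAt ψ ψ' ⟪U, U⟫ := by rwa [hq]
    exact HasDerivAt.comp_hasFDerivAt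
      (f := fun x : EuclideanSpace ℝ (Fin m) => ⟪x, x⟫) U h6' h7
  have hGeq : G = fun x : EuclideanSpace ℝ (Fin m) => ψ ⟪x, x⟫ := by
    funext x
    rw [hGdef x]
    have hx : ⟪x, x⟫ = ‖x‖ ^ 2 := real_inner_self_eq_norm_sq x
    simp only [hψ, hx, Real.sqrt_sq (norm_nonneg x), one_div]
    ring
  have h9 : HasFDerivAt G
      (ψ' • ((fderivInnerCLM ℝ (U, U)).comp
        ((ContinuousLinearMap.id ℝ _).prod (ContinuousLinearMap.id ℝ _)))) U := by
    rw [hGeq]; exact h8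
  -- identify the gradient
  have hdual : (InnerProductSpace.toDual ℝ (EuclideanSpace ℝ (Fin m))) ((2 * ψ') • U)
      = ψ' • ((fderivInnerCLM ℝ (U, U)).comp
        ((ContinuousLinearMap.id ℝ _).prod (ContinuousLinearMap.id ℝ _))) := by
    apply ContinuousLinearMap.ext
    intro y
    rw [InnerProductSpace.toDual_apply_apply]
    simp only [ContinuousLinearMap.smul_apply, ContinuousLinearMap.comp_apply,
      ContinuousLinearMap.prod_apply, ContinuousLinearMap.id_apply, fderivInnerCLM_apply]
    rw [real_inner_smul_left, real_inner_comm y U, smul_eq_mul]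
    ring
  have hgrad : HasGradientAt G ((2 * ψ') • U) U := by
    rw [hasGradientAt_iff_hasFDerivAt, hdual]
    exact h9
  have hgradval : gradient G U = (2 * ψ') • U := hgrad.gradient
  have hinner : ⟪gradient G U, U⟫ = (2 * ψ') * r ^ 2 := by
    rw [hgradval, real_inner_smul_left, hq]
  have key : (1 / 2) * ⟪gradient G U, U⟫ - G U
      = c * r ^ 3 / (2 * (Real.exp 1 + r) * L ^ 2) := by
    rw [hinner, hGdef U, ← hr_def, ← hL_def, hψ']
    field_simp
    ring
  refine ⟨key, fun _ => ?_⟩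
  rw [key]
  have : 0 < c * r ^ 3 / (2 * (Real.exp 1 + r) * L ^ 2) := by
    apply div_pos
    · have hc : 0 < c := mul_pos hη hτ
      positivity
    · positivity
  exact this
end

section
/- Let m ≥ 1, η > 0 and τ > 0, and define G : ℝ^m → ℝ by G(U) = ητ[1 − 1/ln(e+|U|)]|U|². Then for every μ with 1 < μ < 2, one has (½(∇G(U),U) − G(U)) / |U|^{μ} → +∞ as |U| → ∞; that is, G satisfies condition (G₈) for every μ ∈ (1,2). -/
open RealInnerProductSpace Filter Real

lemma aux_deriv (c s : ℝ) (hs : 0 < s) :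
    HasDerivAt (fun t => c * ((1 - 1 / Real.log (Real.exp 1 + Real.sqrt t)) * t))
      (c * (Real.sqrt s / (2 * (Real.exp 1 + Real.sqrt s) *
          (Real.log (Real.exp 1 + Real.sqrt s)) ^ 2)
        + (1 - 1 / Real.log (Real.exp 1 + Real.sqrt s)))) s := by
  have hsq : (0:ℝ) < Real.sqrt s := Real.sqrt_pos.mpr hs
  have hpos : (0:ℝ) < Real.exp 1 + Real.sqrt s := by positivity
  have hL : 1 ≤ Real.log (Real.exp 1 + Real.sqrt s) := by
    calc (1:ℝ) = Real.log (Real.exp 1) := (Real.log_exp 1).symm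
    _ ≤ _ := Real.log_le_log (Real.exp_pos 1) (by linarith)
  have hLne : Real.log (Real.exp 1 + Real.sqrt s) ≠ 0 := by linarith
  have h1 : HasDerivAt (fun t => Real.exp 1 + Real.sqrt t) (1 / (2 * Real.sqrt s)) s :=
    (Real.hasDerivAt_sqrt hs.ne').const_add _
  have h2 : HasDerivAt (fun t => Real.log (Real.exp 1 + Real.sqrt t))
      ((1 / (2 * Real.sqrt s)) / (Real.exp 1 + Real.sqrt s)) s := h1.log hpos.ne'
  have h3 : HasDerivAt (fun t => (Real.log (Real.exp 1 + Real.sqrt t))⁻¹)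
      (-(((1 / (2 * Real.sqrt s)) / (Real.exp 1 + Real.sqrt s))) /
        (Real.log (Real.exp 1 + Real.sqrt s)) ^ 2) s := h2.inv hLne
  have h4 := ((h3.const_sub 1).mul (hasDerivAt_id s)).const_mul c
  have hss : Real.sqrt s * Real.sqrt s = s := Real.mul_self_sqrt hs.le
  convert h4 using 1
  case e'_4 => rfl
  case e'_5 => rfl
  case e'_8 => funext t; simp only [one_div, Pi.mul_apply, id_eq]
  simp only [one_div, id_eq]
  field_simp
  linear_combination c * hss

lemma aux_key (m : ℕ) (η τ : ℝ) (G : EuclideanSpace ℝ (Fin m) → ℝ)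
    (hGdef : ∀ U : EuclideanSpace ℝ (Fin m),
      G U = η * τ * (1 - 1 / Real.log (Real.exp 1 + ‖U‖)) * ‖U‖ ^ 2)
    (U : EuclideanSpace ℝ (Fin m)) (hU : 0 < ‖U‖) :
    (1 / 2) * ⟪gradient G U, U⟫ - G U
      = η * τ * ‖U‖ ^ 3 / (2 * (Real.exp 1 + ‖U‖) * (Real.log (Real.exp 1 + ‖U‖)) ^ 2) := by
  have hs : (0:ℝ) < ‖U‖ ^ 2 := by positivity
  have hsqrt : Real.sqrt (‖U‖ ^ 2) = ‖U‖ := Real.sqrt_sq (norm_nonneg U)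
  have hpos : (0:ℝ) < Real.exp 1 + ‖U‖ := by positivity
  have hL : 1 ≤ Real.log (Real.exp 1 + ‖U‖) := by
    calc (1:ℝ) = Real.log (Real.exp 1) := (Real.log_exp 1).symm
    _ ≤ _ := Real.log_le_log (Real.exp_pos 1) (by linarith)
  have hLne : Real.log (Real.exp 1 + ‖U‖) ≠ 0 := by linarith
  set D : ℝ := η * τ * (‖U‖ / (2 * (Real.exp 1 + ‖U‖) * (Real.log (Real.exp 1 + ‖U‖)) ^ 2)
      + (1 - 1 / Real.log (Real.exp 1 + ‖U‖))) with hD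
  have hF := aux_deriv (η * τ) (‖U‖ ^ 2) hs
  rw [hsqrt] at hF
  have hq : HasFDerivAt (fun V : EuclideanSpace ℝ (Fin m) => ‖V‖ ^ 2)
      (2 • (innerSL ℝ U)) U := (hasStrictFDerivAt_norm_sq U).hasFDerivAt
  have hcomp := hF.comp_hasFDerivAt U hq
  have hGeq : G = (fun t => η * τ * ((1 - 1 / Real.log (Real.exp 1 + Real.sqrt t)) * t)) ∘
      (fun V : EuclideanSpace ℝ (Fin m) => ‖V‖ ^ 2) := by
    funext V
    simp only [Function.comp_apply, Real.sqrt_sq (norm_nonneg V), hGdef V]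
    ring
  have hG' : HasFDerivAt G (D • (2 • (innerSL ℝ U))) U := by
    rw [hGeq]; exact hcomp
  have hgrad : HasGradientAt G ((2 * D) • U) U := by
    rw [hasGradientAt_iff_hasFDerivAt]
    refine hG'.congr_fderiv ?_
    ext v
    simp only [InnerProductSpace.toDual_apply_apply, ContinuousLinearMap.coe_smul', Pi.smul_apply,
      ContinuousLinearMap.smul_apply, innerSL_apply_apply, smul_eq_mul, real_inner_smul_left]
    ring
  rw [hgrad.gradient, real_inner_smul_left, real_inner_self_eq_norm_sq, hGdef U]
  rw [hD]
  field_simp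
  ring

lemma aux_tendsto (c μ : ℝ) (hc : 0 < c) (hμ1 : 1 < μ) (hμ2 : μ < 2) :
    Tendsto (fun r : ℝ => (c * r ^ 3 / (2 * (Real.exp 1 + r) *
        (Real.log (Real.exp 1 + r)) ^ 2)) / r ^ μ) atTop atTop := by
  have hε : (0:ℝ) < 2 - μ := by linarith
  have he3 : Real.exp 1 ≤ 3 := by
    have := Real.exp_one_lt_d9; linarith
  -- (log x)^2 = o(x^(2-μ))
  have h1 := isLittleO_log_rpow_atTop (by linarith : (0:ℝ) < (2 - μ) / 2)
  have h2 : (fun x : ℝ => (Real.log x) ^ 2) =o[atTop] fun x : ℝ => x ^ (2 - μ) := by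
    have := h1.mul h1
    refine this.congr' (by filter_upwards with x; ring) ?_
    filter_upwards [eventually_gt_atTop (0:ℝ)] with x hx
    rw [← Real.rpow_add hx]; ring_nf
  have h4 : Tendsto (fun x : ℝ => (Real.log x) ^ 2 / x ^ (2 - μ)) atTop (nhds 0) :=
    h2.tendsto_div_nhds_zero
  have h5 : Tendsto (fun x : ℝ => (Real.log x) ^ 2 / x ^ (2 - μ)) atTop (nhdsWithin 0 (Set.Ioi 0)) := by
    rw [tendsto_nhdsWithin_iff]
    refine ⟨h4, ?_⟩
    filter_upwards [eventually_ge_atTop (3:ℝ)] with x hx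
    have hx0 : (0:ℝ) < x := by linarith
    have hlx : 1 ≤ Real.log x := by
      calc (1:ℝ) = Real.log (Real.exp 1) := (Real.log_exp 1).symm
      _ ≤ _ := Real.log_le_log (Real.exp_pos 1) (by linarith)
    have : (0:ℝ) < x ^ (2 - μ) := Real.rpow_pos_of_pos hx0 _
    exact Set.mem_Ioi.mpr (by positivity)
  have h6 : Tendsto (fun x : ℝ => x ^ (2 - μ) / (Real.log x) ^ 2) atTop atTop := by
    have := h5.inv_tendsto_nhdsGT_zero
    refine this.congr fun x => ?_
    simp [inv_div]
  have h7 : Tendsto (fun x : ℝ => (c / 16) * (x ^ (2 - μ) / (Real.log x) ^ 2)) atTop atTop :=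
    h6.const_mul_atTop (by positivity)
  refine tendsto_atTop_mono' atTop ?_ h7
  filter_upwards [eventually_ge_atTop (3:ℝ)] with r hr
  have hr0 : (0:ℝ) < r := by linarith
  have hre : Real.exp 1 ≤ r := le_trans he3 hr
  have hpos : (0:ℝ) < Real.exp 1 + r := by positivity
  have hlr : 1 ≤ Real.log r := by
    calc (1:ℝ) = Real.log (Real.exp 1) := (Real.log_exp 1).symm
    _ ≤ _ := Real.log_le_log (Real.exp_pos 1) hre
  have hL1 : 1 ≤ Real.log (Real.exp 1 + r) := by
    calc (1:ℝ) = Real.log (Real.exp 1) := (Real.log_exp 1).symm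
    _ ≤ _ := Real.log_le_log (Real.exp_pos 1) (by linarith)
  have hlog2 : Real.log 2 ≤ 1 := by
    have := Real.log_le_sub_one_of_pos (by norm_num : (0:ℝ) < 2); linarith
  have hB : Real.log (Real.exp 1 + r) ≤ 2 * Real.log r := by
    have h2r : Real.exp 1 + r ≤ 2 * r := by linarith
    calc Real.log (Real.exp 1 + r) ≤ Real.log (2 * r) :=
          Real.log_le_log hpos h2r
    _ = Real.log 2 + Real.log r := Real.log_mul (by norm_num) hr0.ne'
    _ ≤ 2 * Real.log r := by linarith
  have hL2 : (Real.log (Real.exp 1 + r)) ^ 2 ≤ (2 * Real.log r) ^ 2 :=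
    pow_le_pow_left₀ (by linarith) hB 2
  have h16 : 2 * (Real.exp 1 + r) * (Real.log (Real.exp 1 + r)) ^ 2
      ≤ 16 * r * (Real.log r) ^ 2 := by nlinarith
  have hrε : r ^ (2 - μ) = r ^ 3 / (r * r ^ μ) := by
    rw [show (r:ℝ) ^ 3 = r ^ ((3:ℝ)) by
        rw [show ((3:ℝ)) = ((3:ℕ):ℝ) by norm_num, Real.rpow_natCast],
      show r * r ^ μ = r ^ (1 + μ) by rw [Real.rpow_add hr0, Real.rpow_one],
      ← Real.rpow_sub hr0]
    congr 1; ring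
  have hlrne : Real.log r ≠ 0 := by linarith
  have hrμ : (0:ℝ) < r ^ μ := Real.rpow_pos_of_pos hr0 _
  calc (c / 16) * (r ^ (2 - μ) / (Real.log r) ^ 2)
      = c * r ^ 3 / (16 * r * (Real.log r) ^ 2) / r ^ μ := by
        rw [hrε]; field_simp
    _ ≤ c * r ^ 3 / (2 * (Real.exp 1 + r) * (Real.log (Real.exp 1 + r)) ^ 2) / r ^ μ := by
        gcongr

theorem stmt_18 (m : ℕ) (hm : 1 ≤ m) (η τ : ℝ) (hη : 0 < η) (hτ : 0 < τ)
    (G : EuclideanSpace ℝ (Fin m) → ℝ)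
    (hGdef : ∀ U : EuclideanSpace ℝ (Fin m),
      G U = η * τ * (1 - 1 / Real.log (Real.exp 1 + ‖U‖)) * ‖U‖ ^ 2) :
    ∀ μ : ℝ, 1 < μ → μ < 2 →
      Filter.Tendsto
        (fun U : EuclideanSpace ℝ (Fin m) =>
          ((1 / 2) * ⟪gradient G U, U⟫ - G U) / ‖U‖ ^ μ)
        (Bornology.cobounded (EuclideanSpace ℝ (Fin m))) Filter.atTop := by
  intro μ hμ1 hμ2
  have hc : (0:ℝ) < η * τ := mul_pos hη hτ
  have hA := aux_tendsto (η * τ) μ hc hμ1 hμ2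
  have hB : Tendsto (fun U : EuclideanSpace ℝ (Fin m) =>
      (η * τ * ‖U‖ ^ 3 / (2 * (Real.exp 1 + ‖U‖) *
        (Real.log (Real.exp 1 + ‖U‖)) ^ 2)) / ‖U‖ ^ μ)
      (Bornology.cobounded (EuclideanSpace ℝ (Fin m))) atTop :=
    hA.comp tendsto_norm_cobounded_atTop
  refine hB.congr' ?_
  filter_upwards [tendsto_norm_cobounded_atTop.eventually_ge_atTop (1:ℝ)] with U hU
  rw [aux_key m η τ G hGdef U (by linarith)]
end
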